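/- Let λ ∈ (0, 1/2], f a real-valued measurable function, and Q a cube. Then ã_λ(f;Q) ≤ a_λ(f;Q) ≤ 2 ã_λ(f;Q), where a_λ(f;Q) := ((f - m_f(Q))χ_Q)^*(λ|Q|) for a median value m_f(Q), and ã_λ(f;Q) := inf over real c of ((f - c)χ_Q)^*(λ|Q|). -/

import Mathlib

open MeasureTheory Set Metric

/-- The non-increasing rearrangement of a real-valued measurable function on `ℝⁿ`. -/
noncomputable def rearr {n : ℕ} (f : (Fin n → ℝ) → ℝ) (t : ℝ) : ℝ :=
  sInf {α : ℝ | 0 < α ∧ volume {x | α < |f x|} < ENNReal.ofReal t}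

/-- `m` is a median value of `f` over the set `Q`. -/
def IsMedian {n : ℕ} (f : (Fin n → ℝ) → ℝ) (Q : Set (Fin n → ℝ)) (m : ℝ) : Prop :=
  volume {x ∈ Q | m < f x} ≤ volume Q / 2 ∧ volume {x ∈ Q | f x < m} ≤ volume Q / 2

lemma rearr_nonneg {n : ℕ} (f : (Fin n → ℝ) → ℝ) (t : ℝ) : 0 ≤ rearr f t :=
  Real.sInf_nonneg (fun _ hα => hα.1.le)

lemma rearr_set_nonempty {n : ℕ} (g : (Fin n → ℝ) → ℝ) (hg : Measurable g)
    (hsupp : volume {x | g x ≠ 0} < ⊤) {t : ℝ} (ht : 0 < t) :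
    ∃ α : ℝ, 0 < α ∧ volume {x | α < |g x|} < ENNReal.ofReal t := by
  have hmeas : ∀ k : ℕ, MeasurableSet {x | (k : ℝ) < |g x|} := fun k =>
    measurableSet_lt measurable_const hg.abs
  have hanti : Antitone fun k : ℕ => {x : (Fin n → ℝ) | (k : ℝ) < |g x|} := by
    intro a b hab x hx
    simp only [mem_setOf_eq] at hx ⊢
    exact lt_of_le_of_lt (by exact_mod_cast hab) hx
  have hfin : ∃ k : ℕ, volume {x | (k : ℝ) < |g x|} ≠ ⊤ := by
    refine ⟨0, ne_of_lt (lt_of_le_of_lt (measure_mono ?_) hsupp)⟩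
    intro x hx
    simp only [mem_setOf_eq, Nat.cast_zero] at hx ⊢
    intro h
    simp [h] at hx
  have hiInter : (⋂ k : ℕ, {x : (Fin n → ℝ) | (k : ℝ) < |g x|}) = ∅ := by
    ext x
    simp only [mem_iInter, mem_setOf_eq, mem_empty_iff_false, iff_false, not_forall, not_lt]
    obtain ⟨k, hk⟩ := exists_nat_ge |g x|
    exact ⟨k, hk⟩
  have htend := tendsto_measure_iInter_atTop (fun k => (hmeas k).nullMeasurableSet) hanti hfin
  rw [hiInter, measure_empty] at htend
  have htend' : Filter.Tendsto (fun k : ℕ => volume {x | (k : ℝ) < |g x|})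
      Filter.atTop (nhds 0) := htend
  have h2 : ∀ᶠ k : ℕ in Filter.atTop, volume {x | (k : ℝ) < |g x|} < ENNReal.ofReal t :=
    htend'.eventually_lt_const (ENNReal.ofReal_pos.2 ht)
  obtain ⟨k, hk⟩ := h2.exists
  refine ⟨(k : ℝ) + 1, by positivity, lt_of_le_of_lt (measure_mono ?_) hk⟩
  intro x hx
  simp only [mem_setOf_eq] at hx ⊢
  linarith

lemma key_ineq {n : ℕ} {f : (Fin n → ℝ) → ℝ} (hf : Measurable f) {Q : Set (Fin n → ℝ)}
    (hQmeas : MeasurableSet Q) (hQfin : volume Q < ⊤) {t : ℝ} (ht : 0 < t)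
    (htle : ENNReal.ofReal t ≤ volume Q / 2) {m : ℝ}
    (h1 : volume Q / 2 ≤ volume {x | x ∈ Q ∧ m ≤ f x})
    (h2 : volume Q / 2 ≤ volume {x | x ∈ Q ∧ f x ≤ m}) (c : ℝ) :
    rearr (Q.indicator fun x => f x - m) t ≤ 2 * rearr (Q.indicator fun x => f x - c) t := by
  set gm := Q.indicator fun x => f x - m with hgm
  set gc := Q.indicator fun x => f x - c with hgc
  set Sc := {α : ℝ | 0 < α ∧ volume {x | α < |gc x|} < ENNReal.ofReal t} with hSc
  set Sm := {α : ℝ | 0 < α ∧ volume {x | α < |gm x|} < ENNReal.ofReal t} with hSm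
  have hScne : Sc.Nonempty := by
    obtain ⟨α, h0, hv⟩ := rearr_set_nonempty gc ((hf.sub measurable_const).indicator hQmeas)
      (lt_of_le_of_lt (measure_mono (fun x hx => by
        by_contra hxQ
        exact hx (Set.indicator_of_notMem hxQ _))) hQfin) ht
    exact ⟨α, h0, hv⟩
  -- for each α ∈ Sc, rearr gm t ≤ 2 α
  have hstep : ∀ α ∈ Sc, rearr gm t ≤ 2 * α := by
    intro α hα
    obtain ⟨hα0, hαv⟩ := hα
    -- |m - c| ≤ α
    have hmc : |m - c| ≤ α := by
      by_contra hcon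
      push_neg at hcon
      rcases le_or_gt c m with hcm | hcm
      · have hsub : {x | x ∈ Q ∧ m ≤ f x} ⊆ {x | α < |gc x|} := by
          intro x ⟨hxQ, hxf⟩
          have : gc x = f x - c := Set.indicator_of_mem hxQ _
          rw [mem_setOf_eq, this]
          have habs : |m - c| = m - c := abs_of_nonneg (by linarith)
          have : m - c ≤ f x - c := by linarith
          calc α < m - c := by rw [← habs]; exact hcon
            _ ≤ f x - c := this
            _ ≤ |f x - c| := le_abs_self _
        have := le_trans htle (le_trans h1 (measure_mono hsub))
        exact absurd hαv (not_lt.2 this)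
      · have hsub : {x | x ∈ Q ∧ f x ≤ m} ⊆ {x | α < |gc x|} := by
          intro x ⟨hxQ, hxf⟩
          have hgcx : gc x = f x - c := Set.indicator_of_mem hxQ _
          rw [mem_setOf_eq, hgcx]
          have habs : |m - c| = c - m := by
            rw [abs_of_nonpos (by linarith : m - c ≤ 0)]; ring
          have h3 : c - f x ≤ |f x - c| := by
            have := neg_le_abs (f x - c)
            linarith
          calc α < c - m := by rw [← habs]; exact hcon
            _ ≤ c - f x := by linarith
            _ ≤ |f x - c| := h3
        have := le_trans htle (le_trans h2 (measure_mono hsub))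
        exact absurd hαv (not_lt.2 this)
    -- 2α ∈ Sm
    have hmem : (2 * α) ∈ Sm := by
      refine ⟨by linarith, lt_of_le_of_lt (measure_mono ?_) hαv⟩
      intro x hx
      rw [mem_setOf_eq] at hx ⊢
      by_cases hxQ : x ∈ Q
      · have hgmx : gm x = f x - m := Set.indicator_of_mem hxQ _
        have hgcx : gc x = f x - c := Set.indicator_of_mem hxQ _
        rw [hgmx] at hx
        rw [hgcx]
        have htri : |f x - m| ≤ |f x - c| + |c - m| := abs_sub_le _ _ _
        have : |c - m| = |m - c| := abs_sub_comm _ _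
        linarith
      · exfalso
        have hz : gm x = 0 := by rw [hgm]; exact Set.indicator_of_notMem hxQ _
        rw [hz] at hx
        simp at hx
        linarith
    exact csInf_le ⟨0, fun β hβ => hβ.1.le⟩ hmem
  have hhalf : rearr gm t / 2 ≤ sInf Sc := by
    refine le_csInf hScne fun α hα => ?_
    linarith [hstep α hα]
  have : rearr gc t = sInf Sc := rfl
  rw [this]
  linarith

theorem local_osc_median_equiv {n : ℕ} (lam : ℝ) (hlam : lam ∈ Set.Ioc (0 : ℝ) (1/2))
    (f : (Fin n → ℝ) → ℝ) (hf : Measurable f)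
    (cQ : Fin n → ℝ) (r : ℝ) (hr : 0 < r) (m : ℝ)
    (hm : IsMedian f (closedBall cQ r) m) :
    (⨅ c : ℝ, rearr ((closedBall cQ r).indicator fun x => f x - c)
        (lam * (volume (closedBall cQ r)).toReal)) ≤
      rearr ((closedBall cQ r).indicator fun x => f x - m)
        (lam * (volume (closedBall cQ r)).toReal) ∧
    rearr ((closedBall cQ r).indicator fun x => f x - m)
        (lam * (volume (closedBall cQ r)).toReal) ≤
      2 * ⨅ c : ℝ, rearr ((closedBall cQ r).indicator fun x => f x - c)
        (lam * (volume (closedBall cQ r)).toReal) := by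
  obtain ⟨hlam0, hlam2⟩ := hlam
  set Q := closedBall cQ r with hQ
  have hQmeas : MeasurableSet Q := measurableSet_closedBall
  have hQfin : volume Q < ⊤ := (Metric.isBounded_closedBall).measure_lt_top
  have hQpos : 0 < volume Q := measure_closedBall_pos volume cQ hr
  have hTRpos : 0 < (volume Q).toReal := ENNReal.toReal_pos hQpos.ne' hQfin.ne
  set t := lam * (volume Q).toReal with htdef
  have ht : 0 < t := mul_pos hlam0 hTRpos
  have htle : ENNReal.ofReal t ≤ volume Q / 2 := by
    have h1 : t ≤ (volume Q).toReal / 2 := by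
      rw [htdef]
      nlinarith
    calc ENNReal.ofReal t ≤ ENNReal.ofReal ((volume Q).toReal / 2) := ENNReal.ofReal_le_ofReal h1
      _ = ENNReal.ofReal (volume Q).toReal / 2 := by
          rw [ENNReal.ofReal_div_of_pos (by norm_num)]
          norm_num
      _ = volume Q / 2 := by rw [ENNReal.ofReal_toReal hQfin.ne]
  -- median consequences
  have hhalf : ∀ (A B : Set (Fin n → ℝ)), Q ⊆ A ∪ B → volume A ≤ volume Q / 2 →
      volume Q / 2 ≤ volume B := by
    intro A B hsub hA
    have h1 : volume Q ≤ volume A + volume B :=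
      le_trans (measure_mono hsub) (measure_union_le _ _)
    have h2 : volume Q ≤ volume Q / 2 + volume B := le_trans h1 (by gcongr)
    have h3 : volume Q - volume Q / 2 ≤ volume B := tsub_le_iff_left.2 h2
    rwa [ENNReal.sub_half hQfin.ne] at h3
  have h1 : volume Q / 2 ≤ volume {x | x ∈ Q ∧ m ≤ f x} := by
    refine hhalf {x | x ∈ Q ∧ f x < m} _ ?_ hm.2
    intro x hx
    rcases lt_or_ge (f x) m with h | h
    · exact Or.inl ⟨hx, h⟩
    · exact Or.inr ⟨hx, h⟩
  have h2 : volume Q / 2 ≤ volume {x | x ∈ Q ∧ f x ≤ m} := by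
    refine hhalf {x | x ∈ Q ∧ m < f x} _ ?_ hm.1
    intro x hx
    rcases lt_or_ge m (f x) with h | h
    · exact Or.inl ⟨hx, h⟩
    · exact Or.inr ⟨hx, h⟩
  have hkey : ∀ c : ℝ, rearr (Q.indicator fun x => f x - m) t ≤
      2 * rearr (Q.indicator fun x => f x - c) t :=
    key_ineq hf hQmeas hQfin ht htle h1 h2
  have hbdd : BddBelow (Set.range fun c : ℝ =>
      rearr (Q.indicator fun x => f x - c) t) := by
    refine ⟨0, ?_⟩
    rintro _ ⟨c, rfl⟩
    exact rearr_nonneg _ _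
  constructor
  · exact ciInf_le hbdd m
  · have : rearr (Q.indicator fun x => f x - m) t / 2 ≤
        ⨅ c : ℝ, rearr (Q.indicator fun x => f x - c) t :=
      le_ciInf fun c => by linarith [hkey c]
    linarith
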